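/- Let M = (N, I) be a finite matroid with rank function r, and let S ⊆ N be a random subset containing each element of N independently with probability 1/2. Then Pr[ r(S) ≤ r(N)/8 ] ≤ exp(−r(N)/48). -/

import Mathlib

open scoped BigOperators Classical
open MeasureTheory

noncomputable section

/-- A finite matroid on ground set `E`, given by its rank function. -/
structure FinMatroid (α : Type*) [DecidableEq α] where
  E : Finset α
  r : Finset α → ℕ
  rank_le_card : ∀ A : Finset α, r A ≤ A.card
  rank_mono : ∀ ⦃A B : Finset α⦄, A ⊆ B → r A ≤ r B
  rank_submod : ∀ A B : Finset α, r (A ∪ B) + r (A ∩ B) ≤ r A + r B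

variable {α : Type*} [DecidableEq α]

/-- Independence in terms of the rank function. -/
def FinMatroid.Indep (M : FinMatroid α) (I : Finset α) : Prop :=
  I ⊆ M.E ∧ M.r I = I.card

/-- The span (closure) of a set. -/
def FinMatroid.span (M : FinMatroid α) (A : Finset α) : Finset α :=
  M.E.filter fun e => M.r (insert e A) = M.r A

/-- `M.D S lam` : the unique inclusion-wise maximal maximizer of `|U| - lam * r U`
over `U ⊆ S`, realized as the union of all maximizers. -/
def FinMatroid.D (M : FinMatroid α) (S : Finset α) (lam : ℝ) : Finset α :=
  (S.powerset.filter fun U =>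
      ∀ V ∈ S.powerset, (V.card : ℝ) - lam * M.r V ≤ (U.card : ℝ) - lam * M.r U).sup id

/-- The rank-density curve of `M`. -/
def FinMatroid.rdCurve (M : FinMatroid α) : ℝ → ℝ := fun t =>
  sSup {lam : ℝ | 0 ≤ lam ∧ t ≤ (M.r (M.D M.E lam) : ℝ)}

/-- Restriction of a matroid to a subset. -/
def FinMatroid.restrict (M : FinMatroid α) (T : Finset α) : FinMatroid α where
  E := M.E ∩ T
  r := fun A => M.r (A ∩ T)
  rank_le_card := fun A =>
    (M.rank_le_card _).trans (Finset.card_le_card Finset.inter_subset_left)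
  rank_mono := fun A B hAB =>
    M.rank_mono (Finset.inter_subset_inter hAB (Finset.Subset.refl T))
  rank_submod := fun A B => by
    have h1 : (A ∪ B) ∩ T = (A ∩ T) ∪ (B ∩ T) := by ext x; simp only [Finset.mem_inter, Finset.mem_union]; tauto
    have h2 : (A ∩ B) ∩ T = (A ∩ T) ∩ (B ∩ T) := by ext x; simp only [Finset.mem_inter]; tauto
    rw [h1, h2]; exact M.rank_submod _ _

/-- `eta n w a` : the expected maximum weight among a uniformly random subset of
`⌊a⌋` of the `n` weights `w`, with value `0` for `a < 1`. -/
def eta (n : ℕ) (w : Fin n → ℝ) (a : ℝ) : ℝ :=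
  if a < 1 then 0 else
    (∑ R ∈ Finset.powersetCard ⌊a⌋.toNat (Finset.univ : Finset (Fin n)),
        R.fold max 0 w) /
      ((Finset.powersetCard ⌊a⌋.toNat (Finset.univ : Finset (Fin n))).card : ℝ)

/-- `FF n w ρ = ∫_0^∞ η(ρ(t)) dt`. -/
def FF (n : ℕ) (w : Fin n → ℝ) (ρ : ℝ → ℝ) : ℝ :=
  ∫ t in Set.Ioi (0 : ℝ), eta n w (ρ t)

/-- The `(a, b)`-downshift of a curve `ρ`. -/
def downshift (ρ : ℝ → ℝ) (a b : ℝ) : ℝ → ℝ := fun t =>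
  let φ : ℝ := if t ≤ 1 then ρ a / b else ρ (a * t) / b
  if 0 < φ ∧ φ < 1 then 1 else φ

/-- `ρt` is an `(a,b)`-approximation of `ρ`: it is non-increasing and nonnegative on
`(0,∞)` and squeezed between the `(a,b)`-downshift of `ρ` and `ρ` on `(0,∞)`. -/
def IsApprox (a b : ℝ) (ρ ρt : ℝ → ℝ) : Prop :=
  AntitoneOn ρt (Set.Ioi 0) ∧ (∀ t, 0 < t → 0 ≤ ρt t) ∧
    ∀ t, 0 < t → downshift ρ a b t ≤ ρt t ∧ ρt t ≤ ρ t

/-- Probability of event `P` for a random subset `S ⊆ N` including each element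
independently with probability `1/2`. -/
def prHalf (N : Finset α) (P : Finset α → Prop) : ℝ :=
  ((N.powerset.filter P).card : ℝ) / 2 ^ N.card


namespace FinMatroid

variable (M : FinMatroid α)

lemma r_empty' : M.r ∅ = 0 := Nat.le_zero.mp (by simpa using M.rank_le_card ∅)

lemma r_insert_le' (A : Finset α) (x : α) : M.r (insert x A) ≤ M.r A + 1 := by
  have h := M.rank_submod A {x}
  have h1 : M.r {x} ≤ 1 := by simpa using M.rank_le_card {x}
  have h2 : A ∪ {x} = insert x A := by ext y; simp [or_comm]
  rw [h2] at h
  omega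

lemma r_union_le' (A C : Finset α) : M.r (A ∪ C) ≤ M.r A + C.card := by
  induction C using Finset.induction_on with
  | empty => simp
  | @insert a C ha ih =>
    have h2 : A ∪ insert a C = insert a (A ∪ C) := by ext y; simp; try tauto
    rw [h2, Finset.card_insert_of_notMem ha]
    have := M.r_insert_le' (A ∪ C) a
    omega

lemma r_union_eq' (A : Finset α) : ∀ C : Finset α,
    (∀ x ∈ C, M.r (insert x A) = M.r A) → M.r (A ∪ C) = M.r A := by
  intro C
  induction C using Finset.induction_on with
  | empty => intro _; simp
  | @insert a C ha ih =>
    intro h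
    have ihe := ih fun x hx => h x (Finset.mem_insert_of_mem hx)
    have ha' := h a (Finset.mem_insert_self a C)
    have hsub := M.rank_submod (A ∪ C) (insert a A)
    have h1 : (A ∪ C) ∪ insert a A = insert a (A ∪ C) := by ext y; simp; try tauto
    have h2 : A ⊆ (A ∪ C) ∩ insert a A := by
      intro y hy; simp [hy]
    have h3 := M.rank_mono h2
    have h4 : A ∪ insert a C = insert a (A ∪ C) := by ext y; simp; try tauto
    rw [h1] at hsub
    rw [h4]
    have h5 : M.r (A ∪ C) ≤ M.r (insert a (A ∪ C)) :=
      M.rank_mono (Finset.subset_insert _ _)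
    omega

lemma exists_basis' : ∃ B, B ⊆ M.E ∧ M.r B = B.card ∧ B.card = M.r M.E := by
  classical
  set s := M.E.powerset.filter (fun B => M.r B = B.card) with hs
  have hne : s.Nonempty := ⟨∅, by simp [hs, M.r_empty']⟩
  obtain ⟨B, hBs, hmax⟩ := Finset.exists_max_image s Finset.card hne
  simp only [hs, Finset.mem_filter, Finset.mem_powerset] at hBs
  refine ⟨B, hBs.1, hBs.2, ?_⟩
  by_contra hne'
  have hx : ∃ x ∈ M.E, M.r (insert x B) ≠ M.r B := by
    by_contra hno
    push_neg at hno
    have hEq := M.r_union_eq' B M.E hno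
    rw [Finset.union_eq_right.mpr hBs.1] at hEq
    omega
  obtain ⟨x, hxE, hxne⟩ := hx
  have hxB : x ∉ B := fun hxB => hxne (by rw [Finset.insert_eq_self.mpr hxB])
  have h1 := M.r_insert_le' B x
  have h2 : M.r B ≤ M.r (insert x B) := M.rank_mono (Finset.subset_insert _ _)
  have h3 : M.r (insert x B) = B.card + 1 := by omega
  have hmem : insert x B ∈ s := by
    simp only [hs, Finset.mem_filter, Finset.mem_powerset]
    exact ⟨Finset.insert_subset hxE hBs.1,
      by rw [h3, Finset.card_insert_of_notMem hxB]⟩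
  have := hmax _ hmem
  rw [Finset.card_insert_of_notMem hxB] at this
  omega

lemma indep_subset' {I B : Finset α} (hIB : I ⊆ B) (hB : M.r B = B.card) :
    M.r I = I.card := by
  have h1 := M.r_union_le' I (B \ I)
  rw [Finset.union_sdiff_of_subset hIB] at h1
  have h2 := Finset.card_sdiff_of_subset hIB
  have h3 := Finset.card_le_card hIB
  have h4 := M.rank_le_card I
  omega

end FinMatroid

lemma card_filter_le_aux (E B : Finset α) (hB : B ⊆ E)
    (P Q : Finset α → Prop) [DecidablePred P] [DecidablePred Q]
    (h : ∀ S, S ⊆ E → P S → Q (S ∩ B)) :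
    (E.powerset.filter P).card ≤ (B.powerset.filter Q).card * 2 ^ (E \ B).card := by
  classical
  rw [← Finset.card_powerset (E \ B), ← Finset.card_product]
  apply Finset.card_le_card_of_injOn (fun S => (S ∩ B, S \ B))
  · intro S hS
    simp only [Finset.mem_coe, Finset.mem_filter, Finset.mem_powerset] at hS
    simp only [Finset.mem_coe, Finset.mem_product, Finset.mem_filter, Finset.mem_powerset]
    refine ⟨⟨Finset.inter_subset_right, h S hS.1 hS.2⟩, ?_⟩
    exact Finset.sdiff_subset_sdiff hS.1 (le_refl _)
  · intro S _ S' _ heq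
    simp only [Prod.mk.injEq] at heq
    have key : ∀ T : Finset α, T ∩ B ∪ T \ B = T := by
      intro T; ext y
      simp only [Finset.mem_union, Finset.mem_inter, Finset.mem_sdiff]
      tauto
    calc S = S ∩ B ∪ S \ B := (key S).symm
      _ = S' ∩ B ∪ S' \ B := by rw [heq.1, heq.2]
      _ = S' := key S'

lemma sum_powerset_pow_aux (B : Finset α) (x : ℝ) :
    ∑ T ∈ B.powerset, x ^ T.card = (x + 1) ^ B.card := by
  have h := Finset.prod_add (fun _ : α => x) (fun _ : α => 1) B
  simp only [Finset.prod_const, Finset.prod_const_one, mul_one, one_pow] at h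
  exact h.symm

lemma base_ineq_aux : (3:ℝ) ^ ((1:ℝ)/8) * (4/3) ≤ Real.exp (-1/48) * 2 := by
  have ha : (0:ℝ) ≤ (3:ℝ) ^ ((1:ℝ)/8) * (4/3) := by positivity
  have hb : (0:ℝ) ≤ Real.exp (-1/48) * 2 := by positivity
  refine le_of_pow_le_pow_left₀ (n := 48) (by norm_num) hb ?_
  rw [mul_pow, mul_pow]
  have e1 : ((3:ℝ) ^ ((1:ℝ)/8)) ^ (48:ℕ) = 729 := by
    rw [← Real.rpow_natCast ((3:ℝ) ^ ((1:ℝ)/8)) 48, ← Real.rpow_mul (by norm_num)]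
    norm_num
  have e2 : (Real.exp (-1/48)) ^ (48:ℕ) = Real.exp (-1) := by
    rw [← Real.exp_nat_mul]; norm_num
  rw [e1, e2, Real.exp_neg]
  have hp : (0:ℝ) < Real.exp 1 := Real.exp_pos 1
  rw [mul_comm ((Real.exp 1)⁻¹), ← div_eq_mul_inv, le_div_iff₀ hp]
  have he : Real.exp 1 < 2.7182818286 := Real.exp_one_lt_d9
  nlinarith [he, sq_nonneg (Real.exp 1)]

theorem statement12 {α : Type*} [DecidableEq α] (M : FinMatroid α) :
    prHalf M.E (fun S => (M.r S : ℝ) ≤ (M.r M.E : ℝ) / 8)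
      ≤ Real.exp (-(M.r M.E : ℝ) / 48) := by
  classical
  obtain ⟨B, hBE, hBi, hBc⟩ := M.exists_basis'
  set rk := M.r M.E with hrk
  set n := M.E.card with hn
  have hrkn : rk ≤ n := M.rank_le_card M.E
  -- Step 1: the event implies few elements of the basis are sampled
  have key : ∀ S, S ⊆ M.E → ((M.r S : ℝ) ≤ (rk : ℝ) / 8) → 8 * (S ∩ B).card ≤ rk := by
    intro S hS hP
    have h1 : M.r (S ∩ B) = (S ∩ B).card :=
      M.indep_subset' Finset.inter_subset_right hBi
    have h2 : M.r (S ∩ B) ≤ M.r S := M.rank_mono Finset.inter_subset_left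
    have h3 : ((S ∩ B).card : ℝ) ≤ (rk : ℝ) / 8 := by
      rw [← h1]; exact le_trans (Nat.cast_le.mpr h2) hP
    have h4 : ((8 * (S ∩ B).card : ℕ) : ℝ) ≤ (rk : ℝ) := by push_cast; linarith
    exact_mod_cast h4
  have hcount := card_filter_le_aux M.E B hBE
      (fun S => (M.r S : ℝ) ≤ (rk : ℝ) / 8) (fun T => 8 * T.card ≤ rk) key
  have hEB : (M.E \ B).card = n - rk := by rw [Finset.card_sdiff_of_subset hBE, hBc]
  rw [hEB] at hcount
  -- Step 2: bound the number of small subsets of the basis (Chernoff / MGF)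
  have hcB : (((B.powerset.filter fun T => 8 * T.card ≤ rk).card : ℕ) : ℝ)
      ≤ (3:ℝ) ^ ((rk:ℝ)/8) * (4/3) ^ rk := by
    rw [Finset.card_filter]
    push_cast
    calc (∑ T ∈ B.powerset, if 8 * T.card ≤ rk then (1:ℝ) else 0)
        ≤ ∑ T ∈ B.powerset, (3:ℝ) ^ ((rk:ℝ)/8) * (1/3) ^ T.card := by
          apply Finset.sum_le_sum
          intro T _
          by_cases hc : 8 * T.card ≤ rk
          · simp only [hc, if_true]
            have hc' : (T.card : ℝ) ≤ (rk : ℝ) / 8 := by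
              have : ((8 * T.card : ℕ) : ℝ) ≤ (rk : ℝ) := Nat.cast_le.mpr hc
              push_cast at this; linarith
            have h1 : ((3:ℝ)) ^ ((T.card : ℕ) : ℝ) ≤ (3:ℝ) ^ ((rk:ℝ)/8) :=
              Real.rpow_le_rpow_of_exponent_le (by norm_num) hc'
            rw [Real.rpow_natCast] at h1
            have h3 : (3:ℝ) ^ T.card * (1/3:ℝ) ^ T.card = 1 := by
              rw [← mul_pow]; norm_num
            calc (1:ℝ) = (3:ℝ) ^ T.card * (1/3) ^ T.card := h3.symm
              _ ≤ (3:ℝ) ^ ((rk:ℝ)/8) * (1/3) ^ T.card :=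
                  mul_le_mul_of_nonneg_right h1 (by positivity)
          · simp only [hc, if_false]; positivity
      _ = (3:ℝ) ^ ((rk:ℝ)/8) * (4/3) ^ rk := by
          rw [← Finset.mul_sum, sum_powerset_pow_aux, hBc]
          norm_num
  -- Step 3: put it together
  simp only [prHalf]
  rw [div_le_iff₀ (by positivity : (0:ℝ) < 2 ^ M.E.card)]
  have hcast : ((M.E.powerset.filter fun S => (M.r S : ℝ) ≤ (rk : ℝ) / 8).card : ℝ)
      ≤ (((B.powerset.filter fun T => 8 * T.card ≤ rk).card : ℕ) : ℝ) * 2 ^ (n - rk) := by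
    exact_mod_cast hcount
  calc ((M.E.powerset.filter fun S => (M.r S : ℝ) ≤ (rk : ℝ) / 8).card : ℝ)
      ≤ (((B.powerset.filter fun T => 8 * T.card ≤ rk).card : ℕ) : ℝ) * 2 ^ (n - rk) := hcast
    _ ≤ ((3:ℝ) ^ ((rk:ℝ)/8) * (4/3) ^ rk) * 2 ^ (n - rk) :=
        mul_le_mul_of_nonneg_right hcB (by positivity)
    _ ≤ (Real.exp (-(rk:ℝ)/48) * 2 ^ rk) * 2 ^ (n - rk) := by
        apply mul_le_mul_of_nonneg_right _ (by positivity)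
        have e1 : (3:ℝ) ^ ((rk:ℝ)/8) = ((3:ℝ) ^ ((1:ℝ)/8)) ^ rk := by
          rw [← Real.rpow_natCast ((3:ℝ) ^ ((1:ℝ)/8)) rk, ← Real.rpow_mul (by norm_num)]
          rw [show (1:ℝ)/8 * ((rk:ℕ):ℝ) = (rk:ℝ)/8 by ring]
        have e2 : Real.exp (-(rk:ℝ)/48) = (Real.exp (-1/48)) ^ rk := by
          rw [← Real.exp_nat_mul]
          congr 1; ring
        rw [e1, e2, ← mul_pow, ← mul_pow]
        exact pow_le_pow_left₀ (by positivity) base_ineq_aux rk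
    _ = Real.exp (-(rk:ℝ)/48) * 2 ^ M.E.card := by
        rw [mul_assoc, ← pow_add, Nat.add_sub_cancel' hrkn]

end
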